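/- Every partial 3-tree is 3-realizable: for every Euclidean realizable edge-length assignment d on a partial 3-tree G, there is a realization of (G, d) in ℝ³. -/

import Mathlib

open Module Submodule

noncomputable section

variable {E F : Type*} [NormedAddCommGroup E] [InnerProductSpace ℝ E]
  [NormedAddCommGroup F] [InnerProductSpace ℝ F]

private lemma inner_lc {ι : Type*} (u : ι → E) (c c' : ι →₀ ℝ) :
    (inner ℝ (Finsupp.linearCombination ℝ u c) (Finsupp.linearCombination ℝ u c') : ℝ)
      = ∑ i ∈ c.support, ∑ j ∈ c'.support, c i * c' j * inner ℝ (u i) (u j) := by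
  rw [Finsupp.linearCombination_apply, Finsupp.linearCombination_apply, Finsupp.sum, Finsupp.sum,
    sum_inner]
  refine Finset.sum_congr rfl fun i _ => ?_
  rw [inner_sum]
  refine Finset.sum_congr rfl fun j _ => ?_
  rw [real_inner_smul_left, real_inner_smul_right]; ring

/-- Two families with equal Gram matrices in a finite-dimensional inner product space `F`
are related by a (global) linear isometry of `F`. -/
lemma exists_isometry_of_gram [FiniteDimensional ℝ F] {ι : Type*} (u v : ι → F)
    (hg : ∀ i j, (inner ℝ (u i) (u j) : ℝ) = inner ℝ (v i) (v j)) :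
    ∃ T : F →ₗᵢ[ℝ] F, ∀ i, T (u i) = v i := by
  classical
  set L := Finsupp.linearCombination ℝ u with hL
  set M := Finsupp.linearCombination ℝ v with hM
  have key : ∀ c c' : ι →₀ ℝ, (inner ℝ (L c) (L c') : ℝ) = inner ℝ (M c) (M c') := by
    intro c c'
    rw [hL, hM, inner_lc, inner_lc]
    exact Finset.sum_congr rfl fun i _ => Finset.sum_congr rfl fun j _ => by rw [hg i j]
  have hker : LinearMap.ker L ≤ LinearMap.ker M := by
    intro c hc
    rw [LinearMap.mem_ker] at hc ⊢
    have h1 := key c c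
    rw [hc, inner_zero_left] at h1
    exact inner_self_eq_zero.mp h1.symm
  let T₀ : LinearMap.range L →ₗ[ℝ] F :=
    ((LinearMap.ker L).liftQ M hker).comp L.quotKerEquivRange.symm.toLinearMap
  have hT₀ : ∀ c : ι →₀ ℝ, T₀ ⟨L c, LinearMap.mem_range_self L c⟩ = M c := by
    intro c
    show ((LinearMap.ker L).liftQ M hker) (L.quotKerEquivRange.symm ⟨L c, _⟩) = M c
    rw [LinearMap.quotKerEquivRange_symm_apply_image, Submodule.mkQ_apply, Submodule.liftQ_apply]
  have hnorm : ∀ x : LinearMap.range L, ‖T₀ x‖ = ‖x‖ := by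
    rintro ⟨x, c, rfl⟩
    have h1 : T₀ ⟨L c, ⟨c, rfl⟩⟩ = M c := hT₀ c
    rw [h1]
    have h2 := key c c
    rw [real_inner_self_eq_norm_sq, real_inner_self_eq_norm_sq] at h2
    have h3 : ‖(⟨L c, ⟨c, rfl⟩⟩ : LinearMap.range L)‖ = ‖L c‖ := rfl
    rw [h3]
    nlinarith [norm_nonneg (M c), norm_nonneg (L c)]
  let T₁ : LinearMap.range L →ₗᵢ[ℝ] F := ⟨T₀, hnorm⟩
  refine ⟨T₁.extend, fun i => ?_⟩
  have hui : L (Finsupp.single i 1) = u i := by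
    rw [hL, Finsupp.linearCombination_single, one_smul]
  have hmem : u i ∈ LinearMap.range L := ⟨Finsupp.single i 1, hui⟩
  have h4 : T₁.extend (u i) = T₁ ⟨u i, hmem⟩ := T₁.extend_apply ⟨u i, hmem⟩
  rw [h4]
  have h5 : (⟨u i, hmem⟩ : LinearMap.range L) = ⟨L (Finsupp.single i 1), LinearMap.mem_range_self L _⟩ := by
    ext; exact hui.symm
  show T₀ _ = v i
  rw [h5, hT₀, hM, Finsupp.linearCombination_single, one_smul]

/-- Any finite-dimensional inner product space isometrically embeds in one of larger dimension. -/
lemma nonempty_linearIsometry_of_finrank_le [FiniteDimensional ℝ E] [FiniteDimensional ℝ F]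
    (h : finrank ℝ E ≤ finrank ℝ F) : Nonempty (E →ₗᵢ[ℝ] F) := by
  let b := stdOrthonormalBasis ℝ E
  let c := stdOrthonormalBasis ℝ F
  let g : Fin (finrank ℝ E) → F := fun i => c (Fin.castLE h i)
  have hg : Orthonormal ℝ g := c.orthonormal.comp _ (Fin.castLE_injective h)
  let f := b.toBasis.constr ℝ g
  have hb : Orthonormal ℝ ⇑b.toBasis := by rw [OrthonormalBasis.coe_toBasis]; exact b.orthonormal
  have hfb : Orthonormal ℝ (⇑f ∘ ⇑b.toBasis) := by
    have : (⇑f ∘ ⇑b.toBasis) = g := funext fun i => b.toBasis.constr_basis ℝ g i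
    rw [this]; exact hg
  exact ⟨f.isometryOfOrthonormal hb hfb⟩

/-- `n` points and a base point can be isometrically placed in `ℝ^m` if `n ≤ m`. -/
lemma exists_image_points [FiniteDimensional ℝ E] {n m : ℕ} (hnm : n ≤ m)
    (p₀ : E) (p : Fin n → E) :
    ∃ (q₀ : EuclideanSpace ℝ (Fin m)) (q : Fin n → EuclideanSpace ℝ (Fin m)),
      (∀ i, dist q₀ (q i) = dist p₀ (p i)) ∧ (∀ i j, dist (q i) (q j) = dist (p i) (p j)) := by
  set W : Submodule ℝ E := span ℝ (Set.range fun i => p i - p₀) with hW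
  have hdim : finrank ℝ W ≤ finrank ℝ (EuclideanSpace ℝ (Fin m)) := by
    rw [finrank_euclideanSpace_fin]
    exact le_trans (le_trans (finrank_range_le_card _) (by simp)) hnm
  obtain ⟨φ⟩ := nonempty_linearIsometry_of_finrank_le hdim
  refine ⟨0, fun i => φ ⟨p i - p₀, subset_span (Set.mem_range_self i)⟩, fun i => ?_, fun i j => ?_⟩
  · rw [dist_eq_norm, zero_sub, norm_neg, φ.norm_map, dist_eq_norm]
    show ‖p i - p₀‖ = ‖p₀ - p i‖
    rw [norm_sub_rev]
  · rw [dist_eq_norm, ← φ.map_sub, φ.norm_map, dist_eq_norm]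
    show ‖(p i - p₀) - (p j - p₀)‖ = ‖p i - p j‖
    congr 1; abel

private lemma inner_sub_sub (x y z : E) :
    (inner ℝ (y - x) (z - x) : ℝ) = (dist x y ^ 2 + dist x z ^ 2 - dist y z ^ 2) / 2 := by
  have h := norm_sub_sq_real (y - x) (z - x)
  have h2 : (y - x) - (z - x) = y - z := by abel
  rw [h2] at h
  rw [dist_eq_norm, dist_eq_norm, dist_eq_norm, norm_sub_rev x y, norm_sub_rev x z]
  linarith

/-- The apex transplant lemma: if a triangle `A' B' C'` in `ℝ³` is congruent to `A B C` in `E`,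
then any fourth point `P` of `E` can be transplanted to `ℝ³` keeping distances to the triangle. -/
lemma exists_apex [FiniteDimensional ℝ E] (A B C P : E) (A' B' C' : EuclideanSpace ℝ (Fin 3))
    (hAB : dist A' B' = dist A B) (hAC : dist A' C' = dist A C) (hBC : dist B' C' = dist B C) :
    ∃ Q : EuclideanSpace ℝ (Fin 3),
      dist Q A' = dist P A ∧ dist Q B' = dist P B ∧ dist Q C' = dist P C := by
  obtain ⟨q₀, q, hq0, hqq⟩ := exists_image_points (by norm_num : 3 ≤ 3) A ![B, C, P]
  have hq0B : dist q₀ (q 0) = dist A B := by simpa using hq0 0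
  have hq0C : dist q₀ (q 1) = dist A C := by simpa using hq0 1
  have hq0P : dist q₀ (q 2) = dist A P := by simpa using hq0 2
  have hqBC : dist (q 0) (q 1) = dist B C := by simpa using hqq 0 1
  have hqBP : dist (q 0) (q 2) = dist B P := by simpa using hqq 0 2
  have hqCP : dist (q 1) (q 2) = dist C P := by simpa using hqq 1 2
  set u : Fin 2 → EuclideanSpace ℝ (Fin 3) := ![q 0 - q₀, q 1 - q₀] with hu
  set v : Fin 2 → EuclideanSpace ℝ (Fin 3) := ![B' - A', C' - A'] with hv
  have gBB : (inner ℝ (q 0 - q₀) (q 0 - q₀) : ℝ) = inner ℝ (B' - A') (B' - A') := by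
    rw [inner_sub_sub, inner_sub_sub, hq0B, hAB, dist_self, dist_self]
  have gCC : (inner ℝ (q 1 - q₀) (q 1 - q₀) : ℝ) = inner ℝ (C' - A') (C' - A') := by
    rw [inner_sub_sub, inner_sub_sub, hq0C, hAC, dist_self, dist_self]
  have gBC : (inner ℝ (q 0 - q₀) (q 1 - q₀) : ℝ) = inner ℝ (B' - A') (C' - A') := by
    rw [inner_sub_sub, inner_sub_sub, hq0B, hq0C, hqBC, hAB, hAC, hBC]
  have gCB : (inner ℝ (q 1 - q₀) (q 0 - q₀) : ℝ) = inner ℝ (C' - A') (B' - A') := by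
    rw [real_inner_comm (q 0 - q₀) (q 1 - q₀), real_inner_comm (B' - A') (C' - A')]; exact gBC
  have hg : ∀ i j, (inner ℝ (u i) (u j) : ℝ) = inner ℝ (v i) (v j) := by
    intro i j
    fin_cases i <;> fin_cases j
    exacts [gBB, gBC, gCB, gCC]
  obtain ⟨T, hT⟩ := exists_isometry_of_gram u v hg
  have hTB : T (q 0 - q₀) = B' - A' := by simpa [hu, hv] using hT 0
  have hTC : T (q 1 - q₀) = C' - A' := by simpa [hu, hv] using hT 1
  refine ⟨A' + T (q 2 - q₀), ?_, ?_, ?_⟩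
  · rw [dist_eq_norm, add_sub_cancel_left, T.norm_map]
    show ‖q 2 - q₀‖ = dist P A
    rw [← dist_eq_norm, dist_comm, hq0P, dist_comm]
  · rw [dist_eq_norm]
    have : A' + T (q 2 - q₀) - B' = T (q 2 - q₀) - T (q 0 - q₀) := by rw [hTB]; abel
    rw [this, ← T.map_sub, T.norm_map]
    have h2 : (q 2 - q₀) - (q 0 - q₀) = q 2 - q 0 := by abel
    rw [h2, ← dist_eq_norm, dist_comm, hqBP, dist_comm]
  · rw [dist_eq_norm]
    have : A' + T (q 2 - q₀) - C' = T (q 2 - q₀) - T (q 1 - q₀) := by rw [hTC]; abel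
    rw [this, ← T.map_sub, T.norm_map]
    have h2 : (q 2 - q₀) - (q 1 - q₀) = q 2 - q 1 := by abel
    rw [h2, ← dist_eq_norm, dist_comm, hqCP, dist_comm]

end

/-- `f : V → ℝᵏ` is a realization of the graph `G` with edge-length assignment `d`:
every edge `{u,v}` of `G` is drawn with length `d {u,v}`. -/
def IsRealization {V : Type} (G : SimpleGraph V) (d : Sym2 V → ℝ)
    (k : ℕ) (f : V → EuclideanSpace ℝ (Fin k)) : Prop :=
  ∀ u v : V, G.Adj u v → dist (f u) (f v) = d s(u, v)

/-- The edge-length assignment `d` on `G` is Euclidean realizable: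
`(G, d)` has a realization in `ℝᵏ` for some `k ≥ 1`. -/
def EuclideanRealizable {V : Type} (G : SimpleGraph V) (d : Sym2 V → ℝ) : Prop :=
  ∃ k : ℕ, 1 ≤ k ∧ ∃ f : V → EuclideanSpace ℝ (Fin k), IsRealization G d k f

/-- `G` is `n`-realizable: every Euclidean realizable (nonnegative) edge-length
assignment of `G` has a realization in `ℝⁿ`. -/
def DRealizable {V : Type} (G : SimpleGraph V) (n : ℕ) : Prop :=
  ∀ d : Sym2 V → ℝ, (∀ e ∈ G.edgeSet, 0 ≤ d e) → EuclideanRealizable G d →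
    ∃ f : V → EuclideanSpace ℝ (Fin n), IsRealization G d n f

/-- Add a new (apex) vertex adjacent to exactly the three vertices `a`, `b`, `c`. -/
def addApexToTriangle {V : Type} (G : SimpleGraph V) (a b c : V) :
    SimpleGraph (Option V) :=
  SimpleGraph.fromEdgeSet
    (Sym2.map Option.some '' G.edgeSet ∪
      {s((none : Option V), some a), s((none : Option V), some b), s((none : Option V), some c)})

/-- Complete 3-trees: `K₄` is a complete 3-tree, and adding a new vertex adjacent to
exactly the three vertices of a triangle of a complete 3-tree yields a complete 3-tree
(closed under graph isomorphism). -/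
inductive IsComplete3Tree : ∀ {V : Type}, SimpleGraph V → Prop
  | base : IsComplete3Tree (⊤ : SimpleGraph (Fin 4))
  | extend {V : Type} {G : SimpleGraph V} (a b c : V)
      (hab : G.Adj a b) (hac : G.Adj a c) (hbc : G.Adj b c)
      (hG : IsComplete3Tree G) : IsComplete3Tree (addApexToTriangle G a b c)
  | iso {V W : Type} {G : SimpleGraph V} {H : SimpleGraph W}
      (e : G ≃g H) (hG : IsComplete3Tree G) : IsComplete3Tree H

/-- Complete 3-trees are 3-realizable. -/
lemma complete3Tree_threeRealizable {V : Type} {G : SimpleGraph V}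
    (h : IsComplete3Tree G) : DRealizable G 3 := by
  induction h with
  | base =>
    rintro d _ ⟨k, hk, f, hf⟩
    obtain ⟨q₀, q, hq0, hqq⟩ :=
      exists_image_points (by norm_num : 3 ≤ 3) (f 0) (fun i : Fin 3 => f i.succ)
    set g : Fin 4 → EuclideanSpace ℝ (Fin 3) := Fin.cases q₀ q with hgdef
    have claim : ∀ i j : Fin 4, dist (g i) (g j) = dist (f i) (f j) := by
      intro i j
      induction i using Fin.cases with
      | zero =>
        induction j using Fin.cases with
        | zero => simp
        | succ j => simpa [hgdef] using hq0 j
      | succ i =>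
        induction j using Fin.cases with
        | zero =>
          rw [dist_comm, dist_comm (f i.succ)]
          simpa [hgdef] using hq0 i
        | succ j => simpa [hgdef] using hqq i j
    exact ⟨g, fun u v huv => by rw [claim u v]; exact hf u v huv⟩
  | @extend V₁ G₁ a b c hab hac hbc hG ih =>
    rintro d hd ⟨k, hk, F, hF⟩
    have adj_some : ∀ u v : V₁, G₁.Adj u v →
        (addApexToTriangle G₁ a b c).Adj (some u) (some v) := by
      intro u v huv
      rw [addApexToTriangle, SimpleGraph.fromEdgeSet_adj]
      exact ⟨Or.inl ⟨s(u, v), (SimpleGraph.mem_edgeSet _).mpr huv, Sym2.map_pair_eq _ _ _⟩,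
        by simp [huv.ne]⟩
    have adj_a : (addApexToTriangle G₁ a b c).Adj none (some a) := by
      rw [addApexToTriangle, SimpleGraph.fromEdgeSet_adj]
      exact ⟨Or.inr (by simp), by simp⟩
    have adj_b : (addApexToTriangle G₁ a b c).Adj none (some b) := by
      rw [addApexToTriangle, SimpleGraph.fromEdgeSet_adj]
      exact ⟨Or.inr (by simp), by simp⟩
    have adj_c : (addApexToTriangle G₁ a b c).Adj none (some c) := by
      rw [addApexToTriangle, SimpleGraph.fromEdgeSet_adj]
      exact ⟨Or.inr (by simp), by simp⟩
    have hd' : ∀ s ∈ G₁.edgeSet, 0 ≤ (fun s => d (Sym2.map some s)) s := by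
      intro s hs
      induction s with
      | _ u v =>
        rw [SimpleGraph.mem_edgeSet] at hs
        simp only [Sym2.map_pair_eq]
        exact hd _ ((SimpleGraph.mem_edgeSet _).mpr (adj_some u v hs))
    obtain ⟨g, hg⟩ := ih _ hd' ⟨k, hk, fun v => F (some v), fun u v huv => by
      rw [hF _ _ (adj_some u v huv)]; simp only [Sym2.map_pair_eq]⟩
    have eab : dist (g a) (g b) = dist (F (some a)) (F (some b)) := by
      have h1 := hg a b hab
      simp only [Sym2.map_pair_eq] at h1
      rw [h1, ← hF _ _ (adj_some a b hab)]
    have eac : dist (g a) (g c) = dist (F (some a)) (F (some c)) := by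
      have h1 := hg a c hac
      simp only [Sym2.map_pair_eq] at h1
      rw [h1, ← hF _ _ (adj_some a c hac)]
    have ebc : dist (g b) (g c) = dist (F (some b)) (F (some c)) := by
      have h1 := hg b c hbc
      simp only [Sym2.map_pair_eq] at h1
      rw [h1, ← hF _ _ (adj_some b c hbc)]
    obtain ⟨Q, hQa, hQb, hQc⟩ :=
      exists_apex (F (some a)) (F (some b)) (F (some c)) (F none) (g a) (g b) (g c) eab eac ebc
    have kA : dist Q (g a) = d s((none : Option V₁), some a) := by
      rw [hQa, hF _ _ adj_a]
    have kB : dist Q (g b) = d s((none : Option V₁), some b) := by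
      rw [hQb, hF _ _ adj_b]
    have kC : dist Q (g c) = d s((none : Option V₁), some c) := by
      rw [hQc, hF _ _ adj_c]
    refine ⟨fun o => o.elim Q g, fun u v huv => ?_⟩
    rw [addApexToTriangle, SimpleGraph.fromEdgeSet_adj] at huv
    obtain ⟨hmem, hne⟩ := huv
    rcases hmem with ⟨s, hs, hmap⟩ | hmem
    · induction s with
      | _ x y =>
        rw [SimpleGraph.mem_edgeSet] at hs
        rw [Sym2.map_pair_eq] at hmap
        have h1 := hg x y hs
        simp only [Sym2.map_pair_eq] at h1
        rcases Sym2.eq_iff.mp hmap with ⟨hx, hy⟩ | ⟨hx, hy⟩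
        · rw [← hx, ← hy]
          exact h1
        · rw [← hx, ← hy]
          show dist (g y) (g x) = d s(some y, some x)
          rw [dist_comm, Sym2.eq_swap (a := (some y : Option V₁))]
          exact h1
    · simp only [Set.mem_insert_iff, Set.mem_singleton_iff] at hmem
      rcases hmem with hp | hp | hp <;>
        rcases Sym2.eq_iff.mp hp with ⟨h1, h2⟩ | ⟨h1, h2⟩ <;> subst h1 <;> subst h2
      · exact kA
      · show dist (g a) Q = d s(some a, (none : Option V₁))
        rw [dist_comm, Sym2.eq_swap (a := (some a : Option V₁))]
        exact kA
      · exact kB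
      · show dist (g b) Q = d s(some b, (none : Option V₁))
        rw [dist_comm, Sym2.eq_swap (a := (some b : Option V₁))]
        exact kB
      · exact kC
      · show dist (g c) Q = d s(some c, (none : Option V₁))
        rw [dist_comm, Sym2.eq_swap (a := (some c : Option V₁))]
        exact kC
  | @iso V₁ W₁ G₁ H₁ e hG ih =>
    rintro d hd ⟨k, hk, f, hf⟩
    have hd' : ∀ s ∈ G₁.edgeSet, 0 ≤ (fun s => d (Sym2.map e s)) s := by
      intro s hs
      induction s with
      | _ u v =>
        rw [SimpleGraph.mem_edgeSet] at hs
        simp only [Sym2.map_pair_eq]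
        exact hd _ ((SimpleGraph.mem_edgeSet _).mpr (e.map_adj_iff.mpr hs))
    obtain ⟨g, hg⟩ := ih _ hd' ⟨k, hk, fun v => f (e v), fun u v huv => by
      rw [hf _ _ (e.map_adj_iff.mpr huv)]; simp only [Sym2.map_pair_eq]⟩
    refine ⟨fun w => g (e.symm w), fun u v huv => ?_⟩
    have h1 : G₁.Adj (e.symm u) (e.symm v) := by
      rw [← e.map_adj_iff]
      simpa using huv
    have h2 := hg _ _ h1
    simp only [Sym2.map_pair_eq, RelIso.apply_symm_apply] at h2
    exact h2

/-- every partial 3-tree (a spanning subgraph of a complete 3-tree)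
is 3-realizable. -/
theorem partial3Tree_threeRealizable {V : Type} [Fintype V] (G' : SimpleGraph V)
    (h : ∃ G : SimpleGraph V, IsComplete3Tree G ∧ G' ≤ G) :
    DRealizable G' 3 := by
  obtain ⟨G, hG, hle⟩ := h
  rintro d hd ⟨k, hk, f, hf⟩
  set dhat : Sym2 V → ℝ :=
    Sym2.lift ⟨fun u v => dist (f u) (f v), fun u v => dist_comm (f u) (f v)⟩ with hdhat
  have hnn : ∀ s ∈ G.edgeSet, 0 ≤ dhat s := by
    intro s _
    induction s with
    | _ u v => simp only [hdhat, Sym2.lift_mk]; exact dist_nonneg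
  obtain ⟨g, hg⟩ := complete3Tree_threeRealizable hG dhat hnn
    ⟨k, hk, f, fun u v _ => by simp only [hdhat, Sym2.lift_mk]⟩
  refine ⟨g, fun u v huv => ?_⟩
  have h1 := hg u v (hle huv)
  simp only [hdhat, Sym2.lift_mk] at h1
  rw [h1, hf u v huv]
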